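/- Let (Ω, 𝔽, P) be a probability space, let 𝒲 be a measurable space with probability measure ν, and let W_1,…,W_n : Ω → 𝒲 be i.i.d. with law ν. Let H be a countable family of measurable functions h : 𝒲 → ℝ with sup_{w} |h(w)| ≤ b for every h ∈ H, where b > 0. Define the Rademacher complexity R_n(H) := E[ sup_{h∈H} (1/n) Σ_{i=1}^n σ_i h(W_i) ], where σ_1,…,σ_n are i.i.d. uniform on {−1, 1} and independent of (W_1,…,W_n). Then for every δ ≥ 0, with probability at least 1 − 2 exp(−n δ² / (8 b²)) one has sup_{h∈H} | (1/n) Σ_{i=1}^n h(W_i) − E_ν[h] | ≤ 2 R_n(H) + δ. -/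

import Mathlib

open MeasureTheory ProbabilityTheory BigOperators

namespace RadAux
open Real Set


variable {α : Type*} [MeasurableSpace α]

lemma integrable_of_bound (μ : Measure α) [IsFiniteMeasure μ] {f : α → ℝ} (hf : Measurable f)
    {C : ℝ} (hC : ∀ x, |f x| ≤ C) : Integrable f μ :=
  Integrable.mono' (integrable_const C) hf.aestronglyMeasurable
    (ae_of_all _ (by simpa [Real.norm_eq_abs] using hC))

lemma hoeffding_cosh (μ : Measure α) [IsProbabilityMeasure μ] {f : α → ℝ} (hf : Measurable f)
    {M : ℝ} (hM : 0 ≤ M) (hfM : ∀ x, |f x| ≤ M) (hmean : ∫ x, f x ∂μ = 0) (t : ℝ) :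
    ∫ x, Real.exp (t * f x) ∂μ ≤ Real.exp (t ^ 2 * M ^ 2 / 2) := by
  rcases eq_or_lt_of_le hM with h0 | hM
  · have hz : ∀ x, f x = 0 := fun x => abs_nonpos_iff.mp (by rw [h0]; exact hfM x)
    simp only [hz, mul_zero, Real.exp_zero, integral_const, measure_univ, ENNReal.toReal_one, probReal_univ,
      smul_eq_mul, mul_one]
    exact Real.one_le_exp (by positivity)
  · have key : ∀ x, Real.exp (t * f x) ≤
        Real.cosh (t * M) + (f x / M) * Real.sinh (t * M) := by
      intro x
      have hfx := hfM x
      have h1 : 0 ≤ (M - f x) / (2 * M) := by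
        apply div_nonneg _ (by linarith)
        have := (abs_le.mp hfx).2; linarith
      have h2 : 0 ≤ (M + f x) / (2 * M) := by
        apply div_nonneg _ (by linarith)
        have := (abs_le.mp hfx).1; linarith
      have h3 : (M - f x) / (2 * M) + (M + f x) / (2 * M) = 1 := by
        field_simp; ring
      have hconv := convexOn_exp.2 (Set.mem_univ (t * (-M))) (Set.mem_univ (t * M)) h1 h2 h3
      simp only [smul_eq_mul] at hconv
      have harg : (M - f x) / (2 * M) * (t * -M) + (M + f x) / (2 * M) * (t * M) = t * f x := by
        field_simp; ring
      rw [harg] at hconv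
      refine hconv.trans (le_of_eq ?_)
      rw [Real.cosh_eq, Real.sinh_eq]
      rw [show t * -M = -(t * M) by ring]
      field_simp
      ring
    have hfint : Integrable f μ := integrable_of_bound μ hf hfM
    have hint1 : Integrable (fun x => Real.exp (t * f x)) μ := by
      apply integrable_of_bound μ (by fun_prop)
      intro x
      rw [abs_of_pos (Real.exp_pos _)]
      apply Real.exp_le_exp.mpr
      calc t * f x ≤ |t * f x| := le_abs_self _
        _ = |t| * |f x| := abs_mul _ _
        _ ≤ |t| * M := by nlinarith [abs_nonneg t, hfM x]
    have hint2 : Integrable (fun x => Real.cosh (t * M) + (f x / M) * Real.sinh (t * M)) μ :=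
      (integrable_const _).add ((hfint.div_const M).mul_const _)
    calc ∫ x, Real.exp (t * f x) ∂μ
        ≤ ∫ x, (Real.cosh (t * M) + (f x / M) * Real.sinh (t * M)) ∂μ :=
          integral_mono hint1 hint2 key
      _ = Real.cosh (t * M) + ((∫ x, f x ∂μ) / M) * Real.sinh (t * M) := by
          rw [integral_add (integrable_const _) ((hfint.div_const M).mul_const _),
            integral_const, integral_mul_const, integral_div]
          simp [measure_univ]
      _ = Real.cosh (t * M) := by rw [hmean]; simp
      _ ≤ Real.exp ((t * M) ^ 2 / 2) := Real.cosh_le_exp_half_sq _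
      _ = Real.exp (t ^ 2 * M ^ 2 / 2) := by ring_nf


variable {𝒲 : Type*} [MeasurableSpace 𝒲]




lemma measurePreserving_piMap {β γ : Type*} [MeasurableSpace β] [MeasurableSpace γ]
    {n : ℕ} (f : Fin n → β → γ) (μ : Measure β) (κ : Measure γ) [IsProbabilityMeasure μ]
    [IsProbabilityMeasure κ] (hf : ∀ i, MeasurePreserving (f i) μ κ) :
    MeasurePreserving (fun (x : Fin n → β) (i : Fin n) => f i (x i))
      (Measure.pi fun _ => μ) (Measure.pi fun _ => κ) := by
  have hfm : Measurable fun (x : Fin n → β) (i : Fin n) => f i (x i) :=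
    measurable_pi_iff.2 fun i => (hf i).measurable.comp (measurable_pi_apply i)
  refine ⟨hfm, ?_⟩
  refine (Measure.pi_eq fun s hs => ?_).symm
  rw [Measure.map_apply hfm (MeasurableSet.univ_pi hs)]
  have hpre : (fun (x : Fin n → β) (i : Fin n) => f i (x i)) ⁻¹' (Set.pi Set.univ s)
      = Set.pi Set.univ (fun i => f i ⁻¹' s i) := by
    ext x; simp [Set.mem_pi]
  rw [hpre, Measure.pi_pi]
  exact Finset.prod_congr rfl fun i _ => by
    rw [← Measure.map_apply (hf i).measurable (hs i), (hf i).map_eq]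

lemma map_eval_pi (ν : Measure 𝒲) [IsProbabilityMeasure ν] {n : ℕ} (i : Fin n) :
    Measure.map (fun x : Fin n → 𝒲 => x i) (Measure.pi fun _ => ν) = ν := by
  ext s hs
  rw [Measure.map_apply (measurable_pi_apply i) hs]
  have hpre : (fun x : Fin n → 𝒲 => x i) ⁻¹' s
      = Set.pi Set.univ (Function.update (fun _ => Set.univ) i s) := by
    ext x
    simp only [Set.mem_preimage, Set.mem_pi, Set.mem_univ, forall_true_left]
    constructor
    · intro hx j
      rcases eq_or_ne j i with rfl | hj
      · simpa using hx
      · simp [Function.update_of_ne hj]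
    · intro hx
      have := hx i
      simpa using this
  rw [hpre, Measure.pi_pi]
  rw [Finset.prod_eq_single i (fun j _ hj => by simp [Function.update_of_ne hj])
    (by simp)]
  simp

lemma mcdiarmid_mgf (ν : Measure 𝒲) [IsProbabilityMeasure ν] :
    ∀ (n : ℕ) (G : (Fin n → 𝒲) → ℝ), Measurable G →
    ∀ (B : ℝ), 0 ≤ B → (∀ x, |G x| ≤ B) →
    ∀ (c : ℝ), 0 ≤ c →
    (∀ (i : Fin n) (x y : Fin n → 𝒲), (∀ j, j ≠ i → x j = y j) → |G x - G y| ≤ c) →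
    ∀ t : ℝ,
      ∫ x, Real.exp (t * (G x - ∫ y, G y ∂(Measure.pi fun _ : Fin n => ν)))
          ∂(Measure.pi fun _ : Fin n => ν)
        ≤ Real.exp (t ^ 2 * n * c ^ 2 / 2) := by
  intro n
  induction n with
  | zero =>
    intro G hG B hB0 hB c hc hdiff t
    have h0 : ∀ x : Fin 0 → 𝒲, (∫ y, G y ∂(Measure.pi fun _ : Fin 0 => ν)) = G x := by
      intro x
      rw [show (fun y : Fin 0 → 𝒲 => G y) = (fun _ : Fin 0 → 𝒲 => G x) from
        funext (fun y => congrArg G (Subsingleton.elim y x))]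
      simp [measure_univ]
    calc ∫ x, Real.exp (t * (G x - ∫ y, G y ∂(Measure.pi fun _ : Fin 0 => ν)))
            ∂(Measure.pi fun _ : Fin 0 => ν)
        = ∫ _x, (1 : ℝ) ∂(Measure.pi fun _ : Fin 0 => ν) := by
          apply integral_congr_ae
          filter_upwards with x
          rw [h0 x]; simp
      _ = 1 := by simp
      _ ≤ Real.exp (t ^ 2 * (0 : ℕ) * c ^ 2 / 2) := by norm_num
  | succ n IH =>
    intro G hG B hB0 hB c hc hdiff t
    set μn : Measure (Fin n → 𝒲) := Measure.pi fun _ => ν with hμn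
    set μ : Measure (Fin (n + 1) → 𝒲) := Measure.pi fun _ => ν with hμdef
    set e := MeasurableEquiv.piFinSuccAbove (fun _ : Fin (n + 1) => 𝒲) 0 with he
    have mp : MeasurePreserving e μ (ν.prod μn) :=
      measurePreserving_piFinSuccAbove (fun _ : Fin (n + 1) => ν) 0
    have hcons_meas : Measurable (fun p : 𝒲 × (Fin n → 𝒲) => (Fin.cons p.1 p.2 : Fin (n+1) → 𝒲)) := by
      refine measurable_pi_iff.2 fun j => ?_
      refine Fin.cases ?_ (fun k => ?_) j
      · simpa using measurable_fst
      · simpa [Function.comp_def] using (measurable_pi_apply k).comp measurable_snd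
    set G2 : 𝒲 × (Fin n → 𝒲) → ℝ := fun p => G (Fin.cons p.1 p.2) with hG2def
    have hG2 : Measurable G2 := hG.comp hcons_meas
    have hG2B : ∀ p, |G2 p| ≤ B := fun p => hB _
    have hGe : ∀ x : Fin (n + 1) → 𝒲, G2 (e x) = G x := by
      intro x
      show G (Fin.cons (e x).1 (e x).2) = G x
      congr 1
      have hex : e x = (x 0, fun j => x (Fin.succ j)) := rfl
      rw [hex]
      exact Fin.cons_self_tail x
    set m := ∫ x, G x ∂μ with hm
    have hmB : |m| ≤ B := by
      rw [hm]
      have := norm_integral_le_of_norm_le_const (μ := μ) (f := G) (C := B)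
        (ae_of_all _ fun x => by simpa [Real.norm_eq_abs] using hB x)
      simpa [Real.norm_eq_abs, measure_univ] using this
    have hexp_bound : ∀ r : ℝ, |r| ≤ 2 * B → |Real.exp (t * r)| ≤ Real.exp (|t| * (2 * B)) := by
      intro r hr
      rw [abs_of_pos (Real.exp_pos _)]
      apply Real.exp_le_exp.mpr
      calc t * r ≤ |t * r| := le_abs_self _
        _ = |t| * |r| := abs_mul _ _
        _ ≤ |t| * (2 * B) := mul_le_mul_of_nonneg_left hr (abs_nonneg t)
    -- Gbar
    set Gbar : (Fin n → 𝒲) → ℝ := fun y => ∫ w, G2 (w, y) ∂ν with hGbardef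
    have hGbar_meas : Measurable Gbar :=
      (hG2.stronglyMeasurable.integral_prod_left' :
        StronglyMeasurable fun y => ∫ w, G2 (w, y) ∂ν).measurable
    have hGbarB : ∀ y, |Gbar y| ≤ B := by
      intro y
      have := norm_integral_le_of_norm_le_const (μ := ν) (f := fun w => G2 (w, y)) (C := B)
        (ae_of_all _ fun w => by simpa [Real.norm_eq_abs] using hG2B (w, y))
      simpa [Real.norm_eq_abs, measure_univ, hGbardef] using this
    have hG2y_int : ∀ y, Integrable (fun w => G2 (w, y)) ν := fun y =>
      integrable_of_bound ν (hG2.comp (measurable_id.prodMk measurable_const))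
        (fun w => hG2B (w, y))
    have hG2int : Integrable G2 (ν.prod μn) := integrable_of_bound _ hG2 hG2B
    have hG2_int_eq : ∫ p, G2 p ∂(ν.prod μn) = m := by
      rw [← mp.integral_comp e.measurableEmbedding G2, hm]
      apply integral_congr_ae; filter_upwards with x; rw [hGe]
    have hGbar_int_eq : ∫ y, Gbar y ∂μn = m := by
      rw [← hG2_int_eq, integral_prod_symm G2 hG2int]
    have hdev : ∀ (w : 𝒲) (y : Fin n → 𝒲), |G2 (w, y) - Gbar y| ≤ c := by
      intro w y
      have heq : G2 (w, y) - Gbar y = ∫ w', (G2 (w, y) - G2 (w', y)) ∂ν := by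
        rw [integral_sub (integrable_const _) (hG2y_int y), integral_const]
        simp [measure_univ, hGbardef]
      rw [heq]
      have hpt : ∀ w' : 𝒲, ‖G2 (w, y) - G2 (w', y)‖ ≤ c := by
        intro w'
        rw [Real.norm_eq_abs]
        apply hdiff 0 (Fin.cons w y) (Fin.cons w' y)
        intro j hj
        obtain ⟨k, rfl⟩ := Fin.eq_succ_of_ne_zero hj
        simp [Fin.cons_succ]
      have := norm_integral_le_of_norm_le_const (μ := ν)
        (f := fun w' => G2 (w, y) - G2 (w', y)) (C := c) (ae_of_all _ hpt)
      simpa [Real.norm_eq_abs, measure_univ] using this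
    have hdiffbar : ∀ (i : Fin n) (y y' : Fin n → 𝒲),
        (∀ j, j ≠ i → y j = y' j) → |Gbar y - Gbar y'| ≤ c := by
      intro i y y' hyy'
      have heq : Gbar y - Gbar y' = ∫ w, (G2 (w, y) - G2 (w, y')) ∂ν := by
        rw [integral_sub (hG2y_int y) (hG2y_int y')]
      rw [heq]
      have hpt : ∀ w : 𝒲, ‖G2 (w, y) - G2 (w, y')‖ ≤ c := by
        intro w
        rw [Real.norm_eq_abs]
        apply hdiff (Fin.succ i) (Fin.cons w y) (Fin.cons w y')
        intro j
        refine Fin.cases ?_ (fun k => ?_) j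
        · intro _; simp
        · intro hk
          have hki : k ≠ i := fun h => hk (by rw [h])
          simp [Fin.cons_succ, hyy' k hki]
      have := norm_integral_le_of_norm_le_const (μ := ν)
        (f := fun w => G2 (w, y) - G2 (w, y')) (C := c) (ae_of_all _ hpt)
      simpa [Real.norm_eq_abs, measure_univ] using this
    -- main chain
    have hint2 : Integrable (fun p => Real.exp (t * (G2 p - m))) (ν.prod μn) := by
      apply integrable_of_bound _ (by fun_prop)
      intro p
      apply hexp_bound
      have h1 := hG2B p
      calc |G2 p - m| ≤ |G2 p| + |m| := abs_sub _ _
        _ ≤ 2 * B := by linarith [hmB]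
    have step1 : ∫ x, Real.exp (t * (G x - m)) ∂μ = ∫ p, Real.exp (t * (G2 p - m)) ∂(ν.prod μn) := by
      rw [← mp.integral_comp e.measurableEmbedding (fun p => Real.exp (t * (G2 p - m)))]
      apply integral_congr_ae; filter_upwards with x; rw [hGe]
    have step3 : ∀ y, ∫ w, Real.exp (t * (G2 (w, y) - m)) ∂ν
        ≤ Real.exp (t ^ 2 * c ^ 2 / 2) * Real.exp (t * (Gbar y - m)) := by
      intro y
      have hsplit : ∀ w, Real.exp (t * (G2 (w, y) - m))
          = Real.exp (t * (G2 (w, y) - Gbar y)) * Real.exp (t * (Gbar y - m)) := by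
        intro w; rw [← Real.exp_add]; congr 1; ring
      simp_rw [hsplit]
      rw [integral_mul_const]
      have hmeanz : ∫ w, (G2 (w, y) - Gbar y) ∂ν = 0 := by
        rw [integral_sub (hG2y_int y) (integrable_const _), integral_const]
        simp [measure_univ, hGbardef]
      have hh := hoeffding_cosh ν
        (f := fun w => G2 (w, y) - Gbar y)
        ((hG2.comp (measurable_id.prodMk measurable_const)).sub measurable_const)
        hc (fun w => hdev w y) hmeanz t
      exact mul_le_mul_of_nonneg_right hh (Real.exp_pos _).le
    have hGbar_exp_int : Integrable (fun y => Real.exp (t ^ 2 * c ^ 2 / 2)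
        * Real.exp (t * (Gbar y - m))) μn := by
      apply integrable_of_bound (C := Real.exp (t ^ 2 * c ^ 2 / 2) * Real.exp (|t| * (2 * B)))
        _ (by fun_prop)
      intro y
      rw [abs_mul, abs_of_pos (Real.exp_pos _)]
      refine mul_le_mul_of_nonneg_left ?_ (Real.exp_pos _).le
      apply hexp_bound
      calc |Gbar y - m| ≤ |Gbar y| + |m| := abs_sub _ _
        _ ≤ 2 * B := by linarith [hGbarB y, hmB]
    calc ∫ x, Real.exp (t * (G x - m)) ∂μ
        = ∫ p, Real.exp (t * (G2 p - m)) ∂(ν.prod μn) := step1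
      _ = ∫ y, ∫ w, Real.exp (t * (G2 (w, y) - m)) ∂ν ∂μn := integral_prod_symm _ hint2
      _ ≤ ∫ y, Real.exp (t ^ 2 * c ^ 2 / 2) * Real.exp (t * (Gbar y - m)) ∂μn := by
          apply integral_mono_of_nonneg
          · filter_upwards with y
            exact integral_nonneg fun w => (Real.exp_pos _).le
          · exact hGbar_exp_int
          · filter_upwards with y; exact step3 y
      _ = Real.exp (t ^ 2 * c ^ 2 / 2) * ∫ y, Real.exp (t * (Gbar y - m)) ∂μn :=
          integral_const_mul _ _
      _ ≤ Real.exp (t ^ 2 * c ^ 2 / 2) * Real.exp (t ^ 2 * n * c ^ 2 / 2) := by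
          apply mul_le_mul_of_nonneg_left _ (Real.exp_pos _).le
          have := IH Gbar hGbar_meas B hB0 hGbarB c hc hdiffbar t
          rwa [hGbar_int_eq] at this
      _ = Real.exp (t ^ 2 * (n + 1 : ℕ) * c ^ 2 / 2) := by
          rw [← Real.exp_add]; congr 1; push_cast; ring
lemma chernoff (μ : Measure α) [IsProbabilityMeasure μ] {F : α → ℝ} (hF : Measurable F)
    {B : ℝ} (hFB : ∀ x, |F x| ≤ B) {K δ : ℝ} (hK : 0 < K) (hδ : 0 < δ)
    (hmgf : ∀ t : ℝ, ∫ x, Real.exp (t * (F x - ∫ y, F y ∂μ)) ∂μ ≤ Real.exp (t ^ 2 * K)) :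
    μ {x | (∫ y, F y ∂μ) + δ ≤ F x} ≤ ENNReal.ofReal (Real.exp (-δ ^ 2 / (4 * K))) := by
  set m := ∫ y, F y ∂μ with hm
  set t := δ / (2 * K) with ht
  have ht0 : 0 ≤ t := le_of_lt (by positivity)
  have hmB : |m| ≤ B := by
    have := norm_integral_le_of_norm_le_const (μ := μ) (f := F) (C := B)
      (ae_of_all _ fun x => by simpa [Real.norm_eq_abs] using hFB x)
    simpa [Real.norm_eq_abs, measure_univ] using this
  have hint : Integrable (fun x => Real.exp (t * (F x - m))) μ := by
    apply integrable_of_bound (C := Real.exp (|t| * (2 * B))) _ (by fun_prop)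
    intro x
    rw [abs_of_pos (Real.exp_pos _)]
    apply Real.exp_le_exp.mpr
    calc t * (F x - m) ≤ |t * (F x - m)| := le_abs_self _
      _ = |t| * |F x - m| := abs_mul _ _
      _ ≤ |t| * (2 * B) := by
          apply mul_le_mul_of_nonneg_left _ (abs_nonneg t)
          calc |F x - m| ≤ |F x| + |m| := abs_sub _ _
            _ ≤ 2 * B := by linarith [hFB x]
  have hch := measure_ge_le_exp_mul_mgf (μ := μ) (X := fun x => F x - m) δ ht0 hint
  have hmgfle : mgf (fun x => F x - m) μ t ≤ Real.exp (t ^ 2 * K) := hmgf t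
  have hkey : (μ {x | δ ≤ F x - m}).toReal ≤ Real.exp (-δ ^ 2 / (4 * K)) := by
    refine hch.trans ?_
    calc Real.exp (-t * δ) * mgf (fun x => F x - m) μ t
        ≤ Real.exp (-t * δ) * Real.exp (t ^ 2 * K) :=
          mul_le_mul_of_nonneg_left hmgfle (Real.exp_pos _).le
      _ = Real.exp (-t * δ + t ^ 2 * K) := (Real.exp_add _ _).symm
      _ = Real.exp (-δ ^ 2 / (4 * K)) := by
          congr 1
          rw [ht]
          field_simp
          ring
  have hset : {x | m + δ ≤ F x} = {x | δ ≤ F x - m} := by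
    ext x; simp only [Set.mem_setOf_eq]; constructor <;> intro <;> linarith
  rw [hset]
  rw [← ENNReal.ofReal_toReal (measure_ne_top μ _)]
  exact ENNReal.ofReal_le_ofReal hkey

lemma symmetrization (ν : Measure 𝒲) [IsProbabilityMeasure ν] {n : ℕ} (hn : 1 ≤ n)
    {ι : Type*} [Countable ι] [Nonempty ι]
    (g : ι → 𝒲 → ℝ) (hg : ∀ m, Measurable (g m))
    (b : ℝ) (hb : 0 < b) (hgb : ∀ m w, |g m w| ≤ b) :
    ∫ x, (⨆ m, ((1 / (n : ℝ)) * ∑ i, g m (x i) - ∫ w, g m w ∂ν))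
        ∂(Measure.pi fun _ : Fin n => ν)
      ≤ 2 * ((1 / (2 : ℝ) ^ n) * ∑ s : Fin n → Bool,
          ∫ x, (⨆ m, (1 / (n : ℝ)) * ∑ i, (if s i then (1 : ℝ) else -1) * g m (x i))
            ∂(Measure.pi fun _ : Fin n => ν)) := by
  classical
  set μ : Measure (Fin n → 𝒲) := Measure.pi fun _ => ν with hμdef
  set μ2 : Measure (Fin n → 𝒲 × 𝒲) := Measure.pi fun _ => ν.prod ν with hμ2def
  have hn0 : (0 : ℝ) < n := by exact_mod_cast hn
  -- uniform bound tools
  have avg_abs : ∀ (t : Fin n → ℝ) (B : ℝ), 0 ≤ B → (∀ i, |t i| ≤ B)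
      → |(1 / (n : ℝ)) * ∑ i, t i| ≤ B := by
    intro t B hB0 ht
    rw [abs_mul, abs_of_pos (by positivity : (0 : ℝ) < 1 / (n : ℝ))]
    have h1 : |∑ i, t i| ≤ ∑ i, |t i| := Finset.abs_sum_le_sum_abs _ _
    have h2 : ∑ i, |t i| ≤ (n : ℝ) * B := by
      calc ∑ i : Fin n, |t i| ≤ ∑ _i : Fin n, B := Finset.sum_le_sum fun i _ => ht i
        _ = (n : ℝ) * B := by simp [Finset.sum_const, Finset.card_univ, nsmul_eq_mul]
    calc (1 / (n : ℝ)) * |∑ i, t i| ≤ (1 / (n : ℝ)) * ((n : ℝ) * B) :=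
          mul_le_mul_of_nonneg_left (h1.trans h2) (by positivity)
      _ = B := by field_simp
  have bddA : ∀ {f : ι → ℝ} {B : ℝ}, (∀ m, f m ≤ B) → BddAbove (Set.range f) := by
    intro f B h
    exact ⟨B, by rintro _ ⟨m, rfl⟩; exact h m⟩
  have abs_ciSup_le : ∀ {f : ι → ℝ} {B : ℝ}, (∀ m, |f m| ≤ B) → |⨆ m, f m| ≤ B := by
    intro f B hf
    rw [abs_le]
    constructor
    · have h1 := le_ciSup (bddA fun m => (abs_le.mp (hf m)).2) (Classical.arbitrary ι)
      have h2 := (abs_le.mp (hf (Classical.arbitrary ι))).1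
      linarith
    · exact ciSup_le fun m => (abs_le.mp (hf m)).2
  -- basic objects
  set A : ι → (Fin n → 𝒲) → ℝ := fun m x => (1 / (n : ℝ)) * ∑ i, g m (x i) with hAdef
  set mea : ι → ℝ := fun m => ∫ w, g m w ∂ν with hmeadef
  have hA_meas : ∀ m, Measurable (A m) := fun m =>
    (Finset.measurable_sum Finset.univ fun i _ => (hg m).comp (measurable_pi_apply i)).const_mul _
  have hA_bd : ∀ m x, |A m x| ≤ b := fun m x =>
    avg_abs _ b hb.le fun i => hgb m (x i)
  have hmea_bd : ∀ m, |mea m| ≤ b := by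
    intro m
    have := norm_integral_le_of_norm_le_const (μ := ν) (f := g m) (C := b)
      (ae_of_all _ fun w => by simpa [Real.norm_eq_abs] using hgb m w)
    simpa [Real.norm_eq_abs, measure_univ] using this
  have hA_int : ∀ m, Integrable (A m) μ := fun m =>
    integrable_of_bound μ (hA_meas m) (fun x => hA_bd m x)
  have hgxi_int : ∀ m (i : Fin n), Integrable (fun x : Fin n → 𝒲 => g m (x i)) μ := fun m i =>
    integrable_of_bound μ ((hg m).comp (measurable_pi_apply i)) (fun x => hgb m (x i))
  have hmarg : ∀ m (i : Fin n), ∫ x, g m (x i) ∂μ = mea m := by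
    intro m i
    have h := integral_map (μ := μ) (f := g m)
      (measurable_pi_apply i).aemeasurable
      (by rw [hμdef, map_eval_pi]; exact (hg m).aestronglyMeasurable)
    rw [hμdef, map_eval_pi] at h
    rw [hμdef]; exact h.symm
  have hAmean : ∀ m, ∫ x, A m x ∂μ = mea m := by
    intro m
    rw [hAdef]
    simp only
    rw [integral_const_mul, integral_finset_sum Finset.univ fun i _ => hgxi_int m i]
    rw [Finset.sum_congr rfl fun i _ => hmarg m i]
    simp [Finset.sum_const, Finset.card_univ, nsmul_eq_mul]
    field_simp
  -- Step A
  have stepA : ∀ m x, A m x - mea m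
      = ∫ x', ((1 / (n : ℝ)) * ∑ i, (g m (x i) - g m (x' i))) ∂μ := by
    intro m x
    have hfun : (fun x' : Fin n → 𝒲 => (1 / (n : ℝ)) * ∑ i, (g m (x i) - g m (x' i)))
        = fun x' => A m x - A m x' := by
      funext x'
      rw [hAdef]
      simp only [Finset.sum_sub_distrib, mul_sub]
    rw [hfun, integral_sub (integrable_const _) (hA_int m), integral_const, hAmean m]
    simp [measure_univ]
  -- Φ on pairs
  set Φ : (Fin n → 𝒲) → (Fin n → 𝒲) → ℝ :=
    fun x x' => ⨆ m, (1 / (n : ℝ)) * ∑ i, (g m (x i) - g m (x' i)) with hΦdef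
  have hΦterm_bd : ∀ (m : ι) (x x' : Fin n → 𝒲), |(1 / (n : ℝ)) * ∑ i, (g m (x i) - g m (x' i))| ≤ 2 * b := by
    intro m x x'
    apply avg_abs _ _ (by linarith)
    intro i
    calc |g m (x i) - g m (x' i)| ≤ |g m (x i)| + |g m (x' i)| := abs_sub _ _
      _ ≤ 2 * b := by linarith [hgb m (x i), hgb m (x' i)]
  have hΦ_bd : ∀ x x', |Φ x x'| ≤ 2 * b := fun x x' => abs_ciSup_le fun m => hΦterm_bd m x x'
  have hΦp_meas : Measurable (fun p : (Fin n → 𝒲) × (Fin n → 𝒲) => Φ p.1 p.2) := by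
    apply Measurable.iSup
    intro m
    exact (Finset.measurable_sum Finset.univ fun i _ =>
      ((hg m).comp ((measurable_pi_apply i).comp measurable_fst)).sub
      ((hg m).comp ((measurable_pi_apply i).comp measurable_snd))).const_mul _
  have hΦx_meas : ∀ x, Measurable (Φ x) := by
    intro x
    apply Measurable.iSup
    intro m
    exact (Finset.measurable_sum Finset.univ fun i _ =>
      measurable_const.sub ((hg m).comp (measurable_pi_apply i))).const_mul _
  have hΦp_int : Integrable (fun p : (Fin n → 𝒲) × (Fin n → 𝒲) => Φ p.1 p.2) (μ.prod μ) :=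
    integrable_of_bound _ hΦp_meas (fun p => hΦ_bd p.1 p.2)
  -- Step B
  have stepB : ∀ x, (⨆ m, (A m x - mea m)) ≤ ∫ x', Φ x x' ∂μ := by
    intro x
    apply ciSup_le
    intro m
    rw [stepA m x]
    apply integral_mono
    · exact integrable_of_bound μ ((Finset.measurable_sum Finset.univ fun i _ =>
        measurable_const.sub ((hg m).comp (measurable_pi_apply i))).const_mul _)
        (fun x' => hΦterm_bd m x x')
    · exact integrable_of_bound μ (hΦx_meas x) (fun x' => hΦ_bd x x')
    · intro x'
      exact le_ciSup (bddA fun m' => (abs_le.mp (hΦterm_bd m' x x')).2) m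
  -- supremum of deviations, integrable
  have hDsup_int : Integrable (fun x => ⨆ m, (A m x - mea m)) μ := by
    apply integrable_of_bound μ (Measurable.iSup fun m => (hA_meas m).sub measurable_const)
    intro x
    apply abs_ciSup_le
    intro m
    calc |A m x - mea m| ≤ |A m x| + |mea m| := abs_sub _ _
      _ ≤ 2 * b := by linarith [hA_bd m x, hmea_bd m]
  -- Step C
  have stepC : ∫ x, (⨆ m, (A m x - mea m)) ∂μ
      ≤ ∫ p, Φ p.1 p.2 ∂(μ.prod μ) := by
    have h1 : ∫ x, (⨆ m, (A m x - mea m)) ∂μ ≤ ∫ x, (∫ x', Φ x x' ∂μ) ∂μ := by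
      apply integral_mono hDsup_int hΦp_int.integral_prod_left
      intro x
      exact stepB x
    refine h1.trans (le_of_eq ?_)
    exact (integral_prod _ hΦp_int).symm
  -- Step D : transfer to μ2
  set ap := MeasurableEquiv.arrowProdEquivProdArrow 𝒲 𝒲 (Fin n) with hapdef
  have mp2 : MeasurePreserving ap μ2 (μ.prod μ) :=
    measurePreserving_arrowProdEquivProdArrow 𝒲 𝒲 (Fin n) (fun _ => ν) (fun _ => ν)
  set Φ2 : (Fin n → 𝒲 × 𝒲) → ℝ :=
    fun z => ⨆ m, (1 / (n : ℝ)) * ∑ i, (g m (z i).1 - g m (z i).2) with hΦ2def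
  have hΦ2_meas : Measurable Φ2 := by
    apply Measurable.iSup
    intro m
    exact (Finset.measurable_sum Finset.univ fun i _ =>
      ((hg m).comp (measurable_fst.comp (measurable_pi_apply i))).sub
      ((hg m).comp (measurable_snd.comp (measurable_pi_apply i)))).const_mul _
  have hΦ2_bd : ∀ z, |Φ2 z| ≤ 2 * b := by
    intro z
    apply abs_ciSup_le
    intro m
    apply avg_abs _ _ (by linarith)
    intro i
    calc |g m (z i).1 - g m (z i).2| ≤ |g m (z i).1| + |g m (z i).2| := abs_sub _ _
      _ ≤ 2 * b := by linarith [hgb m (z i).1, hgb m (z i).2]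
  have stepD : ∫ p, Φ p.1 p.2 ∂(μ.prod μ) = ∫ z, Φ2 z ∂μ2 := by
    rw [← mp2.integral_comp ap.measurableEmbedding (fun p => Φ p.1 p.2)]
    rfl
  -- Step E : sign flips
  set σf : (Fin n → Bool) → Fin n → ℝ := fun s i => if s i then (1 : ℝ) else -1 with hσdef
  set Ψ : (Fin n → Bool) → (Fin n → 𝒲 × 𝒲) → ℝ :=
    fun s z => ⨆ m, (1 / (n : ℝ)) * ∑ i, σf s i * (g m (z i).1 - g m (z i).2) with hΨdef
  have hΨ_meas : ∀ s, Measurable (Ψ s) := by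
    intro s
    apply Measurable.iSup
    intro m
    exact (Finset.measurable_sum Finset.univ fun i _ =>
      (((hg m).comp (measurable_fst.comp (measurable_pi_apply i))).sub
      ((hg m).comp (measurable_snd.comp (measurable_pi_apply i)))).const_mul _).const_mul _
  have hσ_abs : ∀ s i, |σf s i| = 1 := by
    intro s i
    rw [hσdef]
    by_cases h : s i <;> simp [h]
  have hΨterm_bd : ∀ s (m : ι) (z : Fin n → 𝒲 × 𝒲),
      |(1 / (n : ℝ)) * ∑ i, σf s i * (g m (z i).1 - g m (z i).2)| ≤ 2 * b := by
    intro s m z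
    apply avg_abs _ _ (by linarith)
    intro i
    rw [abs_mul, hσ_abs s i, one_mul]
    calc |g m (z i).1 - g m (z i).2| ≤ |g m (z i).1| + |g m (z i).2| := abs_sub _ _
      _ ≤ 2 * b := by linarith [hgb m (z i).1, hgb m (z i).2]
  have hΨ_bd : ∀ s z, |Ψ s z| ≤ 2 * b := fun s z => abs_ciSup_le fun m => hΨterm_bd s m z
  have stepE : ∀ s : Fin n → Bool, ∫ z, Φ2 z ∂μ2 = ∫ z, Ψ s z ∂μ2 := by
    intro s
    set T : (Fin n → 𝒲 × 𝒲) → (Fin n → 𝒲 × 𝒲) :=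
      fun z i => if s i then z i else Prod.swap (z i) with hTdef
    have hTpres : MeasurePreserving T μ2 μ2 := by
      have := measurePreserving_piMap (n := n)
        (fun i (p : 𝒲 × 𝒲) => if s i then p else Prod.swap p) (ν.prod ν) (ν.prod ν)
        (fun i => by
          by_cases h : s i
          · simpa [h] using (⟨measurable_id', Measure.map_id'⟩ : MeasurePreserving (fun p : 𝒲 × 𝒲 => p) (ν.prod ν) (ν.prod ν))
          · simp only [h, if_false]
            exact ⟨measurable_swap, Measure.prod_swap⟩)
      convert this using 2
    have h1 : ∫ z, Φ2 z ∂μ2 = ∫ z, Φ2 (T z) ∂μ2 := by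
      conv_lhs => rw [← hTpres.map_eq]
      exact integral_map hTpres.measurable.aemeasurable
        (by rw [hTpres.map_eq]; exact hΦ2_meas.aestronglyMeasurable)
    rw [h1]
    apply integral_congr_ae
    filter_upwards with z
    rw [hΦ2def, hΨdef]
    simp only
    congr 1
    funext m
    congr 1
    apply Finset.sum_congr rfl
    intro i _
    rw [hTdef, hσdef]
    by_cases h : s i <;> simp [h] <;> ring
  -- U functionals
  set U : (Fin n → Bool) → (Fin n → 𝒲) → ℝ :=
    fun s x => ⨆ m, (1 / (n : ℝ)) * ∑ i, σf s i * g m (x i) with hUdef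
  set nots : (Fin n → Bool) → (Fin n → Bool) := fun s i => !(s i) with hnotsdef
  have hU_meas : ∀ s, Measurable (U s) := by
    intro s
    apply Measurable.iSup
    intro m
    exact (Finset.measurable_sum Finset.univ fun i _ =>
      ((hg m).comp (measurable_pi_apply i)).const_mul _).const_mul _
  have hUterm_bd : ∀ s (m : ι) (x : Fin n → 𝒲),
      |(1 / (n : ℝ)) * ∑ i, σf s i * g m (x i)| ≤ b := by
    intro s m x
    apply avg_abs _ _ hb.le
    intro i
    rw [abs_mul, hσ_abs s i, one_mul]
    exact hgb m (x i)
  have hU_bd : ∀ s x, |U s x| ≤ b := fun s x => abs_ciSup_le fun m => hUterm_bd s m x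
  have hU_int : ∀ s, Integrable (U s) μ := fun s =>
    integrable_of_bound μ (hU_meas s) (fun x => hU_bd s x)
  -- marginal projections
  have hfst : MeasurePreserving (fun (z : Fin n → 𝒲 × 𝒲) (i : Fin n) => (z i).1) μ2 μ :=
    measurePreserving_piMap (fun _ => Prod.fst) (ν.prod ν) ν
      (fun _ => ⟨measurable_fst, Measure.fst_prod⟩)
  have hsnd : MeasurePreserving (fun (z : Fin n → 𝒲 × 𝒲) (i : Fin n) => (z i).2) μ2 μ :=
    measurePreserving_piMap (fun _ => Prod.snd) (ν.prod ν) ν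
      (fun _ => ⟨measurable_snd, Measure.snd_prod⟩)
  have hUfst_eq : ∀ s, ∫ x, U s x ∂μ = ∫ z, U s (fun i => (z i).1) ∂μ2 := by
    intro s
    conv_lhs => rw [← hfst.map_eq]
    exact integral_map hfst.measurable.aemeasurable
      (by rw [hfst.map_eq]; exact (hU_meas s).aestronglyMeasurable)
  have hUsnd_eq : ∀ s, ∫ x, U s x ∂μ = ∫ z, U s (fun i => (z i).2) ∂μ2 := by
    intro s
    conv_lhs => rw [← hsnd.map_eq]
    exact integral_map hsnd.measurable.aemeasurable
      (by rw [hsnd.map_eq]; exact (hU_meas s).aestronglyMeasurable)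
  have hU1_int : ∀ s, Integrable (fun z : Fin n → 𝒲 × 𝒲 => U s (fun i => (z i).1)) μ2 := by
    intro s
    apply integrable_of_bound μ2 ((hU_meas s).comp
      (measurable_pi_iff.2 fun i => measurable_fst.comp (measurable_pi_apply i)))
    intro z
    exact hU_bd s _
  have hU2_int : ∀ s, Integrable (fun z : Fin n → 𝒲 × 𝒲 => U s (fun i => (z i).2)) μ2 := by
    intro s
    apply integrable_of_bound μ2 ((hU_meas s).comp
      (measurable_pi_iff.2 fun i => measurable_snd.comp (measurable_pi_apply i)))
    intro z
    exact hU_bd s _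
  -- Step F
  have stepF : ∀ s : Fin n → Bool,
      ∫ z, Ψ s z ∂μ2 ≤ (∫ x, U s x ∂μ) + (∫ x, U (nots s) x ∂μ) := by
    intro s
    have hpt : ∀ z : Fin n → 𝒲 × 𝒲,
        Ψ s z ≤ U s (fun i => (z i).1) + U (nots s) (fun i => (z i).2) := by
      intro z
      apply ciSup_le
      intro m
      have key : (1 / (n : ℝ)) * ∑ i, σf s i * (g m (z i).1 - g m (z i).2)
          = (1 / (n : ℝ)) * ∑ i, σf s i * g m (z i).1
            + (1 / (n : ℝ)) * ∑ i, σf (nots s) i * g m (z i).2 := by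
        rw [← mul_add, ← Finset.sum_add_distrib]
        congr 1
        apply Finset.sum_congr rfl
        intro i _
        rw [hσdef, hnotsdef]
        by_cases h : s i <;> simp [h] <;> ring
      rw [key]
      exact add_le_add
        (le_ciSup (f := fun m' : ι => (1 / (n : ℝ)) * ∑ i, σf s i * g m' (z i).1)
          (bddA fun m' => (abs_le.mp (hUterm_bd s m' (fun i => (z i).1))).2) m)
        (le_ciSup (f := fun m' : ι => (1 / (n : ℝ)) * ∑ i, σf (nots s) i * g m' (z i).2)
          (bddA fun m' => (abs_le.mp (hUterm_bd (nots s) m' (fun i => (z i).2))).2) m)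
    calc ∫ z, Ψ s z ∂μ2
        ≤ ∫ z, (U s (fun i => (z i).1) + U (nots s) (fun i => (z i).2)) ∂μ2 := by
          apply integral_mono
            (integrable_of_bound μ2 (hΨ_meas s) (fun z => hΨ_bd s z))
            ((hU1_int s).add (hU2_int (nots s))) hpt
      _ = (∫ z, U s (fun i => (z i).1) ∂μ2) + ∫ z, U (nots s) (fun i => (z i).2) ∂μ2 :=
          integral_add (hU1_int s) (hU2_int (nots s))
      _ = (∫ x, U s x ∂μ) + (∫ x, U (nots s) x ∂μ) := by
          rw [hUfst_eq s, hUsnd_eq (nots s)]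
  -- sum over sign patterns
  have h2n : (0 : ℝ) < (2 : ℝ) ^ n := by positivity
  have hcard : (Finset.univ : Finset (Fin n → Bool)).card = 2 ^ n := by
    simp [Finset.card_univ]
  have hsum : ∑ s : Fin n → Bool, ∫ z, Ψ s z ∂μ2 = (2 : ℝ) ^ n * ∫ z, Φ2 z ∂μ2 := by
    rw [Finset.sum_congr rfl fun s _ => (stepE s).symm, Finset.sum_const, hcard]
    push_cast
    ring
  have hinv : Function.Involutive nots := by
    intro s
    funext i
    rw [hnotsdef]
    simp
  have hre : ∑ s : Fin n → Bool, ∫ x, U (nots s) x ∂μ = ∑ s : Fin n → Bool, ∫ x, U s x ∂μ :=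
    Fintype.sum_equiv (Function.Involutive.toPerm nots hinv)
      (fun s => ∫ x, U (nots s) x ∂μ) (fun s => ∫ x, U s x ∂μ) (fun s => rfl)
  -- final chain
  show ∫ x, (⨆ m, (A m x - mea m)) ∂μ ≤ 2 * ((1 / (2 : ℝ) ^ n) * ∑ s : Fin n → Bool, ∫ x, U s x ∂μ)
  calc ∫ x, (⨆ m, (A m x - mea m)) ∂μ
      ≤ ∫ p, Φ p.1 p.2 ∂(μ.prod μ) := stepC
    _ = ∫ z, Φ2 z ∂μ2 := stepD
    _ = (1 / (2 : ℝ) ^ n) * ∑ s : Fin n → Bool, ∫ z, Ψ s z ∂μ2 := by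
        rw [hsum]
        field_simp
    _ ≤ (1 / (2 : ℝ) ^ n) * ∑ s : Fin n → Bool, ((∫ x, U s x ∂μ) + (∫ x, U (nots s) x ∂μ)) := by
        apply mul_le_mul_of_nonneg_left _ (by positivity)
        exact Finset.sum_le_sum fun s _ => stepF s
    _ = 2 * ((1 / (2 : ℝ) ^ n) * ∑ s : Fin n → Bool, ∫ x, U s x ∂μ) := by
        rw [Finset.sum_add_distrib, hre]
        ring

lemma deviation_tail (ν : Measure 𝒲) [IsProbabilityMeasure ν] {n : ℕ} (hn : 1 ≤ n)
    {ι : Type*} [Countable ι] [Nonempty ι]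
    (g : ι → 𝒲 → ℝ) (hg : ∀ m, Measurable (g m))
    (b : ℝ) (hb : 0 < b) (hgb : ∀ m w, |g m w| ≤ b) {δ : ℝ} (hδ : 0 < δ) :
    (Measure.pi fun _ : Fin n => ν)
        {x | (∫ x', (⨆ m, ((1 / (n : ℝ)) * ∑ i, g m (x' i) - ∫ w, g m w ∂ν))
              ∂(Measure.pi fun _ : Fin n => ν)) + δ
            ≤ ⨆ m, ((1 / (n : ℝ)) * ∑ i, g m (x i) - ∫ w, g m w ∂ν)}
      ≤ ENNReal.ofReal (Real.exp (-((n : ℝ) * δ ^ 2) / (8 * b ^ 2))) := by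
  classical
  set μ : Measure (Fin n → 𝒲) := Measure.pi fun _ => ν with hμdef
  have hn0 : (0 : ℝ) < n := by exact_mod_cast hn
  set F : (Fin n → 𝒲) → ℝ :=
    fun x => ⨆ m, ((1 / (n : ℝ)) * ∑ i, g m (x i) - ∫ w, g m w ∂ν) with hFdef
  have avg_abs : ∀ (t : Fin n → ℝ) (B : ℝ), 0 ≤ B → (∀ i, |t i| ≤ B)
      → |(1 / (n : ℝ)) * ∑ i, t i| ≤ B := by
    intro t B hB0 ht
    rw [abs_mul, abs_of_pos (by positivity : (0 : ℝ) < 1 / (n : ℝ))]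
    have h1 : |∑ i, t i| ≤ ∑ i, |t i| := Finset.abs_sum_le_sum_abs _ _
    have h2 : ∑ i, |t i| ≤ (n : ℝ) * B := by
      calc ∑ i : Fin n, |t i| ≤ ∑ _i : Fin n, B := Finset.sum_le_sum fun i _ => ht i
        _ = (n : ℝ) * B := by simp [Finset.sum_const, Finset.card_univ, nsmul_eq_mul]
    calc (1 / (n : ℝ)) * |∑ i, t i| ≤ (1 / (n : ℝ)) * ((n : ℝ) * B) :=
          mul_le_mul_of_nonneg_left (h1.trans h2) (by positivity)
      _ = B := by field_simp
  have bddA : ∀ {f : ι → ℝ} {B : ℝ}, (∀ m, f m ≤ B) → BddAbove (Set.range f) := by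
    intro f B h
    exact ⟨B, by rintro _ ⟨m, rfl⟩; exact h m⟩
  have abs_ciSup_le : ∀ {f : ι → ℝ} {B : ℝ}, (∀ m, |f m| ≤ B) → |⨆ m, f m| ≤ B := by
    intro f B hf
    rw [abs_le]
    refine ⟨?_, ciSup_le fun m => (abs_le.mp (hf m)).2⟩
    have h1 := le_ciSup (bddA fun m => (abs_le.mp (hf m)).2) (Classical.arbitrary ι)
    have h2 := (abs_le.mp (hf (Classical.arbitrary ι))).1
    linarith
  have hmea_bd : ∀ m, |∫ w, g m w ∂ν| ≤ b := by
    intro m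
    have := norm_integral_le_of_norm_le_const (μ := ν) (f := g m) (C := b)
      (ae_of_all _ fun w => by simpa [Real.norm_eq_abs] using hgb m w)
    simpa [Real.norm_eq_abs, measure_univ] using this
  have hD_bd : ∀ (m : ι) (x : Fin n → 𝒲),
      |(1 / (n : ℝ)) * ∑ i, g m (x i) - ∫ w, g m w ∂ν| ≤ 2 * b := by
    intro m x
    have h1 : |(1 / (n : ℝ)) * ∑ i, g m (x i)| ≤ b := avg_abs _ b hb.le fun i => hgb m (x i)
    calc |(1 / (n : ℝ)) * ∑ i, g m (x i) - ∫ w, g m w ∂ν|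
        ≤ |(1 / (n : ℝ)) * ∑ i, g m (x i)| + |∫ w, g m w ∂ν| := abs_sub _ _
      _ ≤ 2 * b := by linarith [hmea_bd m]
  have hF_meas : Measurable F := by
    apply Measurable.iSup
    intro m
    exact ((Finset.measurable_sum Finset.univ fun i _ =>
      (hg m).comp (measurable_pi_apply i)).const_mul _).sub measurable_const
  have hF_bd : ∀ x, |F x| ≤ 2 * b := fun x => abs_ciSup_le fun m => hD_bd m x
  set c : ℝ := 2 * b / n with hcdef
  have hc : 0 < c := by positivity
  have hF_key : ∀ (i : Fin n) (x y : Fin n → 𝒲),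
      (∀ j, j ≠ i → x j = y j) → F x ≤ F y + c := by
    intro i x y hxy
    apply ciSup_le
    intro m
    have hsum : (∑ j, g m (x j)) - ∑ j, g m (y j) = g m (x i) - g m (y i) := by
      rw [← Finset.sum_sub_distrib]
      apply Finset.sum_eq_single_of_mem i (Finset.mem_univ i)
      intro j _ hj
      rw [hxy j hj]
      ring
    have habs : (1 / (n : ℝ)) * ((∑ j, g m (x j)) - ∑ j, g m (y j)) ≤ c := by
      rw [hsum]
      have h2 : g m (x i) - g m (y i) ≤ 2 * b := by
        linarith [(abs_le.mp (hgb m (x i))).2, (abs_le.mp (hgb m (y i))).1]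
      calc (1 / (n : ℝ)) * (g m (x i) - g m (y i)) ≤ (1 / (n : ℝ)) * (2 * b) :=
            mul_le_mul_of_nonneg_left h2 (by positivity)
        _ = c := by rw [hcdef]; ring
    have hmul : (1 / (n : ℝ)) * ((∑ j, g m (x j)) - ∑ j, g m (y j))
        = (1 / (n : ℝ)) * ∑ j, g m (x j) - (1 / (n : ℝ)) * ∑ j, g m (y j) := by ring
    have hDm : (1 / (n : ℝ)) * ∑ j, g m (y j) - ∫ w, g m w ∂ν ≤ F y :=
      le_ciSup (bddA fun m' => (abs_le.mp (hD_bd m' y)).2) m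
    linarith
  have hF_diff : ∀ (i : Fin n) (x y : Fin n → 𝒲),
      (∀ j, j ≠ i → x j = y j) → |F x - F y| ≤ c := by
    intro i x y hxy
    rw [abs_le]
    constructor
    · have := hF_key i y x fun j hj => (hxy j hj).symm
      linarith
    · have := hF_key i x y hxy
      linarith
  set K : ℝ := (n : ℝ) * c ^ 2 / 2 with hKdef
  have hK : 0 < K := by positivity
  have hmgf : ∀ t : ℝ, ∫ x, Real.exp (t * (F x - ∫ y, F y ∂μ)) ∂μ ≤ Real.exp (t ^ 2 * K) := by
    intro t
    refine (mcdiarmid_mgf ν n F hF_meas (2 * b) (by positivity) hF_bd c hc.le hF_diff t).trans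
      (le_of_eq ?_)
    congr 1
    rw [hKdef]
    ring
  have hch := chernoff μ hF_meas hF_bd hK hδ hmgf
  have hexpeq : -δ ^ 2 / (4 * K) = -((n : ℝ) * δ ^ 2) / (8 * b ^ 2) := by
    rw [hKdef, hcdef]
    rw [div_eq_div_iff (by positivity) (by positivity)]
    field_simp
    ring
  rw [hexpeq] at hch
  exact hch

end RadAux
/-- **Rademacher generalization bound (Theorem 3 of the paper's appendix).** For i.i.d. samples
`W 0, …, W (n-1)` with law `ν` and a countable family `h m : 𝒲 → ℝ` of measurable functions
uniformly bounded by `b`, with probability at least `1 − 2 exp(−n δ² / (8 b²))` the uniform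
deviation of empirical means from true means is at most twice the Rademacher complexity `R`
plus `δ`.  Here `R` is the expectation (over the sample and over independent uniform signs,
written as the explicit average over all sign patterns `s : Fin n → Bool`) of
`sup_m (1/n) ∑ i σ_i h m (W i)`. -/
theorem stmt_12 {Ω 𝒲 : Type*} [MeasurableSpace Ω] [MeasurableSpace 𝒲]
    (P : Measure Ω) [IsProbabilityMeasure P]
    (ν : Measure 𝒲) [IsProbabilityMeasure ν]
    {n : ℕ} (hn : 1 ≤ n)
    (W : Fin n → Ω → 𝒲)
    (hWmeas : ∀ i, Measurable (W i))
    (hWindep : iIndepFun W P)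
    (hWlaw : ∀ i, Measure.map (W i) P = ν)
    {ι : Type*} [Countable ι]
    (h : ι → 𝒲 → ℝ) (hmeas : ∀ m, Measurable (h m))
    (b : ℝ) (hb : 0 < b) (hbound : ∀ m w, |h m w| ≤ b)
    (R : ℝ)
    (hR : R = ∫ ω, ((1 : ℝ) / 2 ^ n) * ∑ s : Fin n → Bool,
      ⨆ m : ι, (1 / (n : ℝ)) * ∑ i, (if s i then (1 : ℝ) else -1) * h m (W i ω) ∂P) :
    ∀ δ : ℝ, 0 ≤ δ →
      ENNReal.ofReal (1 - 2 * Real.exp (-(n * δ ^ 2) / (8 * b ^ 2))) ≤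
        P {ω | ⨆ m : ι,
          |(1 / (n : ℝ)) * ∑ i, h m (W i ω) - ∫ w, h m w ∂ν| ≤ 2 * R + δ} := by
  classical
  intro δ hδ
  rcases le_or_gt (1 - 2 * Real.exp (-(n * δ ^ 2) / (8 * b ^ 2))) 0 with htriv | hpos
  · rw [ENNReal.ofReal_of_nonpos htriv]
    exact zero_le
  have hδpos : 0 < δ := by
    rcases eq_or_lt_of_le hδ with heq | hlt
    · exfalso
      rw [← heq] at hpos
      norm_num at hpos
    · exact hlt
  have hn0 : (0 : ℝ) < n := by exact_mod_cast hn
  rcases isEmpty_or_nonempty ι with hemp | hne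
  · -- empty index type : both sides trivial
    have hR0 : R = 0 := by
      rw [hR]
      have hz : (fun ω => ((1 : ℝ) / 2 ^ n) * ∑ s : Fin n → Bool,
          ⨆ m : ι, (1 / (n : ℝ)) * ∑ i, (if s i then (1 : ℝ) else -1) * h m (W i ω))
          = fun _ => (0 : ℝ) := by
        funext ω
        rw [Finset.sum_congr rfl fun s _ => Real.iSup_of_isEmpty _]
        simp
      rw [hz]
      simp
    have hset : {ω | ⨆ m : ι,
        |(1 / (n : ℝ)) * ∑ i, h m (W i ω) - ∫ w, h m w ∂ν| ≤ 2 * R + δ} = Set.univ := by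
      ext ω
      simp only [Set.mem_setOf_eq, Set.mem_univ, iff_true]
      rw [Real.iSup_of_isEmpty, hR0]
      linarith
    rw [hset, measure_univ]
    exact ENNReal.ofReal_le_one.mpr (by linarith [Real.exp_pos (-(n * δ ^ 2) / (8 * b ^ 2))])
  -- main case
  set μ : Measure (Fin n → 𝒲) := Measure.pi fun _ : Fin n => ν with hμdef
  set S : Ω → (Fin n → 𝒲) := fun ω i => W i ω with hSdef
  have hS : Measurable S := measurable_pi_lambda _ hWmeas
  have hmap : Measure.map S P = μ := by
    rw [hμdef]
    refine (Measure.pi_eq fun s hs => ?_).symm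
    rw [Measure.map_apply hS (MeasurableSet.univ_pi hs)]
    have hpre : S ⁻¹' (Set.pi Set.univ s) = ⋂ i ∈ Finset.univ, W i ⁻¹' s i := by
      ext ω
      simp [hSdef, Set.mem_pi]
    rw [hpre, hWindep.measure_inter_preimage_eq_mul Finset.univ (fun i _ => hs i)]
    refine Finset.prod_congr rfl fun i _ => ?_
    rw [← hWlaw i, Measure.map_apply (hWmeas i) (hs i)]
  -- basic sup tools
  have bddA : ∀ {f : ι → ℝ} {B : ℝ}, (∀ m, f m ≤ B) → BddAbove (Set.range f) := by
    intro f B hf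
    exact ⟨B, by rintro _ ⟨m, rfl⟩; exact hf m⟩
  have avg_abs : ∀ (t : Fin n → ℝ) (B : ℝ), 0 ≤ B → (∀ i, |t i| ≤ B)
      → |(1 / (n : ℝ)) * ∑ i, t i| ≤ B := by
    intro t B hB0 ht
    rw [abs_mul, abs_of_pos (by positivity : (0 : ℝ) < 1 / (n : ℝ))]
    have h1 : |∑ i, t i| ≤ ∑ i, |t i| := Finset.abs_sum_le_sum_abs _ _
    have h2 : ∑ i, |t i| ≤ (n : ℝ) * B := by
      calc ∑ i : Fin n, |t i| ≤ ∑ _i : Fin n, B := Finset.sum_le_sum fun i _ => ht i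
        _ = (n : ℝ) * B := by simp [Finset.sum_const, Finset.card_univ, nsmul_eq_mul]
    calc (1 / (n : ℝ)) * |∑ i, t i| ≤ (1 / (n : ℝ)) * ((n : ℝ) * B) :=
          mul_le_mul_of_nonneg_left (h1.trans h2) (by positivity)
      _ = B := by field_simp
  have abs_ciSup_le : ∀ {f : ι → ℝ} {B : ℝ}, (∀ m, |f m| ≤ B) → |⨆ m, f m| ≤ B := by
    intro f B hf
    rw [abs_le]
    refine ⟨?_, ciSup_le fun m => (abs_le.mp (hf m)).2⟩
    have h1 := le_ciSup (bddA fun m => (abs_le.mp (hf m)).2) (Classical.arbitrary ι)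
    have h2 := (abs_le.mp (hf (Classical.arbitrary ι))).1
    linarith
  have hmea_bd : ∀ m : ι, |∫ w, h m w ∂ν| ≤ b := by
    intro m
    have := norm_integral_le_of_norm_le_const (μ := ν) (f := h m) (C := b)
      (ae_of_all _ fun w => by simpa [Real.norm_eq_abs] using hbound m w)
    simpa [Real.norm_eq_abs, measure_univ] using this
  have hD_bd : ∀ (m : ι) (x : Fin n → 𝒲),
      |(1 / (n : ℝ)) * ∑ i, h m (x i) - ∫ w, h m w ∂ν| ≤ 2 * b := by
    intro m x
    have h1 : |(1 / (n : ℝ)) * ∑ i, h m (x i)| ≤ b := avg_abs _ b hb.le fun i => hbound m (x i)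
    calc |(1 / (n : ℝ)) * ∑ i, h m (x i) - ∫ w, h m w ∂ν|
        ≤ |(1 / (n : ℝ)) * ∑ i, h m (x i)| + |∫ w, h m w ∂ν| := abs_sub _ _
      _ ≤ 2 * b := by linarith [hmea_bd m]
  -- U functionals
  set U : (Fin n → Bool) → (Fin n → 𝒲) → ℝ :=
    fun s x => ⨆ m : ι, (1 / (n : ℝ)) * ∑ i, (if s i then (1 : ℝ) else -1) * h m (x i)
    with hUdef
  have hU_meas : ∀ s, Measurable (U s) := by
    intro s
    apply Measurable.iSup
    intro m
    exact (Finset.measurable_sum Finset.univ fun i _ =>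
      ((hmeas m).comp (measurable_pi_apply i)).const_mul _).const_mul _
  have hUterm_bd : ∀ (s : Fin n → Bool) (m : ι) (x : Fin n → 𝒲),
      |(1 / (n : ℝ)) * ∑ i, (if s i then (1 : ℝ) else -1) * h m (x i)| ≤ b := by
    intro s m x
    apply avg_abs _ _ hb.le
    intro i
    rw [abs_mul]
    have : |(if s i then (1 : ℝ) else -1)| = 1 := by by_cases hsi : s i <;> simp [hsi]
    rw [this, one_mul]
    exact hbound m (x i)
  have hU_bd : ∀ s x, |U s x| ≤ b := fun s x => abs_ciSup_le fun m => hUterm_bd s m x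
  have hU_int : ∀ s, Integrable (U s) μ := fun s =>
    RadAux.integrable_of_bound μ (hU_meas s) (fun x => hU_bd s x)
  -- identify R
  have hH_meas : Measurable (fun x => ((1 : ℝ) / 2 ^ n) * ∑ s : Fin n → Bool, U s x) :=
    (Finset.measurable_sum Finset.univ fun s _ => hU_meas s).const_mul _
  have hR1 : R = ∫ x, ((1 : ℝ) / 2 ^ n) * ∑ s : Fin n → Bool, U s x ∂μ := by
    have h1 : ∫ x, ((1 : ℝ) / 2 ^ n) * ∑ s : Fin n → Bool, U s x ∂(Measure.map S P)
        = ∫ ω, ((1 : ℝ) / 2 ^ n) * ∑ s : Fin n → Bool, U s (S ω) ∂P :=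
      integral_map hS.aemeasurable (by rw [hmap]; exact hH_meas.aestronglyMeasurable)
    have h2 : R = ∫ ω, ((1 : ℝ) / 2 ^ n) * ∑ s : Fin n → Bool, U s (S ω) ∂P := hR
    rw [h2, ← h1, hmap]
  have hRμ : R = ((1 : ℝ) / 2 ^ n) * ∑ s : Fin n → Bool, ∫ x, U s x ∂μ := by
    rw [hR1, integral_const_mul, integral_finset_sum Finset.univ fun s _ => hU_int s]
  -- deviation functionals
  set Fp : (Fin n → 𝒲) → ℝ :=
    fun x => ⨆ m : ι, ((1 / (n : ℝ)) * ∑ i, h m (x i) - ∫ w, h m w ∂ν) with hFpdef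
  set Fm : (Fin n → 𝒲) → ℝ :=
    fun x => ⨆ m : ι, ((1 / (n : ℝ)) * ∑ i, -h m (x i) - ∫ w, -h m w ∂ν) with hFmdef
  have hFm_body : ∀ (m : ι) (x : Fin n → 𝒲),
      (1 / (n : ℝ)) * ∑ i, -h m (x i) - ∫ w, -h m w ∂ν
        = -((1 / (n : ℝ)) * ∑ i, h m (x i) - ∫ w, h m w ∂ν) := by
    intro m x
    rw [integral_neg, Finset.sum_neg_distrib]
    ring
  -- symmetrization bounds
  have hEp : ∫ x, Fp x ∂μ ≤ 2 * R := by
    have hsym := RadAux.symmetrization ν hn h hmeas b hb hbound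
    rw [hRμ]
    exact hsym
  have hEm : ∫ x, Fm x ∂μ ≤ 2 * R := by
    have hsym := RadAux.symmetrization ν hn (fun m w => -h m w)
      (fun m => (hmeas m).neg) b hb (fun m w => by simpa using hbound m w)
    have hUg : ∀ s : Fin n → Bool,
        (fun x : Fin n → 𝒲 => ⨆ m : ι,
            (1 / (n : ℝ)) * ∑ i, (if s i then (1 : ℝ) else -1) * -h m (x i))
          = U (fun i => !(s i)) := by
      intro s
      funext x
      rw [hUdef]
      congr 1
      funext m
      congr 1
      apply Finset.sum_congr rfl
      intro i _
      by_cases hsi : s i <;> simp [hsi] <;> ring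
    have hsum_eq : ∑ s : Fin n → Bool, ∫ x, (⨆ m : ι,
        (1 / (n : ℝ)) * ∑ i, (if s i then (1 : ℝ) else -1) * -h m (x i)) ∂μ
        = ∑ s : Fin n → Bool, ∫ x, U s x ∂μ := by
      rw [Finset.sum_congr rfl fun s _ => by rw [show (fun x : Fin n → 𝒲 => ⨆ m : ι,
        (1 / (n : ℝ)) * ∑ i, (if s i then (1 : ℝ) else -1) * -h m (x i)) = U (fun i => !(s i))
        from hUg s]]
      have hinv : Function.Involutive (fun (s : Fin n → Bool) (i : Fin n) => !(s i)) := by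
        intro s
        funext i
        simp
      exact Fintype.sum_equiv (Function.Involutive.toPerm _ hinv)
        (fun s => ∫ x, U (fun i => !(s i)) x ∂μ) (fun s => ∫ x, U s x ∂μ) (fun s => rfl)
    calc ∫ x, Fm x ∂μ
        ≤ 2 * (((1 : ℝ) / 2 ^ n) * ∑ s : Fin n → Bool, ∫ x, (⨆ m : ι,
            (1 / (n : ℝ)) * ∑ i, (if s i then (1 : ℝ) else -1) * -h m (x i)) ∂μ) := hsym
      _ = 2 * R := by rw [hsum_eq, hRμ]
  -- tail bounds
  have htail_p : μ {x | (∫ x', Fp x' ∂μ) + δ ≤ Fp x}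
      ≤ ENNReal.ofReal (Real.exp (-(n * δ ^ 2) / (8 * b ^ 2))) :=
    RadAux.deviation_tail ν hn h hmeas b hb hbound hδpos
  have htail_m : μ {x | (∫ x', Fm x' ∂μ) + δ ≤ Fm x}
      ≤ ENNReal.ofReal (Real.exp (-(n * δ ^ 2) / (8 * b ^ 2))) :=
    RadAux.deviation_tail ν hn (fun m w => -h m w) (fun m => (hmeas m).neg) b hb
      (fun m w => by simpa using hbound m w) hδpos
  -- target set
  set T : Set (Fin n → 𝒲) := {x | (⨆ m : ι,
      |(1 / (n : ℝ)) * ∑ i, h m (x i) - ∫ w, h m w ∂ν|) ≤ 2 * R + δ} with hTdef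
  have hFabs_meas : Measurable (fun x : Fin n → 𝒲 => ⨆ m : ι,
      |(1 / (n : ℝ)) * ∑ i, h m (x i) - ∫ w, h m w ∂ν|) := by
    apply Measurable.iSup
    intro m
    exact (((Finset.measurable_sum Finset.univ fun i _ =>
      (hmeas m).comp (measurable_pi_apply i)).const_mul _).sub measurable_const).abs
  have hTmeas : MeasurableSet T := measurableSet_le hFabs_meas measurable_const
  -- inclusion
  have hincl : Tᶜ ⊆ {x | (∫ x', Fp x' ∂μ) + δ ≤ Fp x} ∪ {x | (∫ x', Fm x' ∂μ) + δ ≤ Fm x} := by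
    intro x hx
    by_contra hcon
    rw [Set.mem_union] at hcon
    push_neg at hcon
    obtain ⟨h1, h2⟩ := hcon
    rw [Set.mem_setOf_eq, not_le] at h1
    rw [Set.mem_setOf_eq, not_le] at h2
    apply hx
    show (⨆ m : ι, |(1 / (n : ℝ)) * ∑ i, h m (x i) - ∫ w, h m w ∂ν|) ≤ 2 * R + δ
    apply ciSup_le
    intro m
    rw [abs_le]
    constructor
    · have hle : -((1 / (n : ℝ)) * ∑ i, h m (x i) - ∫ w, h m w ∂ν) ≤ Fm x := by
        rw [← hFm_body m x]
        exact le_ciSup (bddA (f := fun m : ι =>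
          (1 / (n : ℝ)) * ∑ i, -h m (x i) - ∫ w, -h m w ∂ν) (B := 2 * b)
          fun m' => by
            show (1 / (n : ℝ)) * ∑ i, -h m' (x i) - ∫ w, -h m' w ∂ν ≤ 2 * b
            rw [hFm_body m' x]
            have := (abs_le.mp (hD_bd m' x)).1
            linarith) m
      have : Fm x < 2 * R + δ := lt_of_lt_of_le h2 (by linarith [hEm])
      linarith
    · have hle : (1 / (n : ℝ)) * ∑ i, h m (x i) - ∫ w, h m w ∂ν ≤ Fp x :=
        le_ciSup (bddA fun m' => (abs_le.mp (hD_bd m' x)).2) m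
      have : Fp x < 2 * R + δ := lt_of_lt_of_le h1 (by linarith [hEp])
      linarith
  -- measure bound
  set E8 : ℝ := Real.exp (-(n * δ ^ 2) / (8 * b ^ 2)) with hE8def
  have hcompl : μ Tᶜ ≤ ENNReal.ofReal (2 * E8) := by
    calc μ Tᶜ ≤ μ ({x | (∫ x', Fp x' ∂μ) + δ ≤ Fp x} ∪ {x | (∫ x', Fm x' ∂μ) + δ ≤ Fm x}) :=
          measure_mono hincl
      _ ≤ μ {x | (∫ x', Fp x' ∂μ) + δ ≤ Fp x} + μ {x | (∫ x', Fm x' ∂μ) + δ ≤ Fm x} :=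
          measure_union_le _ _
      _ ≤ ENNReal.ofReal E8 + ENNReal.ofReal E8 := add_le_add htail_p htail_m
      _ = ENNReal.ofReal (2 * E8) := by
          rw [← ENNReal.ofReal_add (Real.exp_pos _).le (Real.exp_pos _).le, two_mul]
  have hμT : ENNReal.ofReal (1 - 2 * E8) ≤ μ T := by
    have hunion : (1 : ENNReal) ≤ μ T + μ Tᶜ := by
      have : (Set.univ : Set (Fin n → 𝒲)) = T ∪ Tᶜ := by simp
      calc (1 : ENNReal) = μ Set.univ := (measure_univ).symm
        _ = μ (T ∪ Tᶜ) := by rw [← this]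
        _ ≤ μ T + μ Tᶜ := measure_union_le _ _
    have h1 : (1 : ENNReal) - ENNReal.ofReal (2 * E8) ≤ μ T := by
      rw [tsub_le_iff_right]
      calc (1 : ENNReal) ≤ μ T + μ Tᶜ := hunion
        _ ≤ μ T + ENNReal.ofReal (2 * E8) := add_le_add_right hcompl _
    calc ENNReal.ofReal (1 - 2 * E8)
        = ENNReal.ofReal 1 - ENNReal.ofReal (2 * E8) :=
          ENNReal.ofReal_sub _ (by positivity)
      _ = 1 - ENNReal.ofReal (2 * E8) := by rw [ENNReal.ofReal_one]
      _ ≤ μ T := h1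
  -- transfer back to Ω
  have hPT : P {ω | ⨆ m : ι,
      |(1 / (n : ℝ)) * ∑ i, h m (W i ω) - ∫ w, h m w ∂ν| ≤ 2 * R + δ} = μ T := by
    have hpre : {ω | ⨆ m : ι,
        |(1 / (n : ℝ)) * ∑ i, h m (W i ω) - ∫ w, h m w ∂ν| ≤ 2 * R + δ} = S ⁻¹' T := rfl
    rw [hpre, ← Measure.map_apply hS hTmeas, hmap]
  rw [hPT]
  exact hμT
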